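/- arXiv:2511.19289 — 2 statements merged into one kernel-verified Lean document; each statement's English description precedes it below -/
import Mathlib

section
/- Let λ₁,…,λ_d be real numbers with |λ_j| ≤ log b for all j, where b ≥ 1. Then the Lagrange interpolation polynomial p(x) = Σ_{j=1}^d λ_j ∏_{i≠j} (d·x − i)/(j − i) is a polynomial of degree at most d−1 satisfying p(i/d) = λ_i for all i ∈ {1,…,d}, and every coefficient a_ℓ of p satisfies |a_ℓ| ≤ (3e)^d (log b)/(2π). -/
open Polynomial Real Finset

lemma stirl_lb (n : ℕ) : Real.sqrt π ≤ Stirling.stirlingSeq (n+1) :=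
  Stirling.stirlingSeq'_antitone.le_of_tendsto
    (Stirling.tendsto_stirlingSeq_sqrt_pi.comp (Filter.tendsto_add_atTop_nat 1)) n

lemma stirl_ub (n : ℕ) : Stirling.stirlingSeq (n+1) ≤ Real.exp 1 / Real.sqrt 2 := by
  have := Stirling.stirlingSeq'_antitone (Nat.zero_le n)
  simpa [Stirling.stirlingSeq_one] using this

lemma fact_eq (n : ℕ) (h : 1 ≤ n) : (n.factorial : ℝ) = Stirling.stirlingSeq n * (Real.sqrt (2*n) * ((n:ℝ)/Real.exp 1)^n) := by
  have h0 : (0:ℕ) < n := h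
  rw [Stirling.stirlingSeq, div_mul_cancel₀]
  have : (0:ℝ) < (n:ℝ) := by exact_mod_cast h0
  positivity

lemma fact_lb (n : ℕ) (hn : 1 ≤ n) :
    Real.sqrt π * (Real.sqrt (2*n) * ((n:ℝ)/Real.exp 1)^n) ≤ (n.factorial : ℝ) := by
  rw [fact_eq n hn]
  obtain ⟨m, rfl⟩ := Nat.exists_eq_add_of_le hn
  have := stirl_lb m
  rw [add_comm 1 m] at *
  have h2 : (0:ℝ) ≤ Real.sqrt (2*((m+1:ℕ):ℝ)) * (((m+1:ℕ):ℝ)/Real.exp 1)^(m+1) := by positivity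
  exact mul_le_mul_of_nonneg_right this h2

lemma fact_ub (n : ℕ) (hn : 1 ≤ n) :
    (n.factorial : ℝ) ≤ (Real.exp 1 / Real.sqrt 2) * (Real.sqrt (2*n) * ((n:ℝ)/Real.exp 1)^n) := by
  rw [fact_eq n hn]
  obtain ⟨m, rfl⟩ := Nat.exists_eq_add_of_le hn
  have := stirl_ub m
  rw [add_comm 1 m] at *
  have h2 : (0:ℝ) ≤ Real.sqrt (2*((m+1:ℕ):ℝ)) * (((m+1:ℕ):ℝ)/Real.exp 1)^(m+1) := by positivity
  exact mul_le_mul_of_nonneg_right this h2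

-- ∏_{i∈Icc 1 n} i = n!
lemma prod_Icc_id (n : ℕ) : (∏ x ∈ Icc 1 n, x) = n.factorial := by
  rw [show Icc 1 n = Ico 1 (n+1) by rw [Finset.Ico_add_one_right_eq_Icc]]
  exact Finset.prod_Ico_id_eq_factorial n

-- d! * ∏_{i∈Icc 1 d}(d+i) = (2d)!
lemma fact_mul_prod (d : ℕ) : d.factorial * (∏ i ∈ Icc 1 d, (d+i)) = (2*d).factorial := by
  have h1 : (∏ i ∈ Icc 1 d, (d+i)) = ∏ i ∈ Icc (d+1) (d+d), i := by
    rw [← Finset.map_add_left_Icc 1 d d, Finset.prod_map]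
    rfl
  rw [h1, ← prod_Icc_id d, ← prod_Icc_id (2*d)]
  rw [show Icc 1 d = Ioc 0 d by ext x; simp; omega,
      show Icc (d+1) (d+d) = Ioc d (2*d) by ext x; simp; omega,
      show Icc 1 (2*d) = Ioc 0 (2*d) by ext x; simp; omega]
  exact Finset.prod_Ioc_consecutive _ (Nat.zero_le d) (by omega)

-- denominator
lemma denom_eq (d j : ℕ) (h1 : 1 ≤ j) (h2 : j ≤ d) :
    (∏ i ∈ (Icc 1 d).erase j, |(j:ℝ) - (i:ℝ)|) =
      ((j-1).factorial : ℝ) * ((d-j).factorial : ℝ) := by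
  have hsplit : (Icc 1 d).erase j = Ico 1 j ∪ Ioc j d := by
    ext x
    simp only [Finset.mem_erase, Finset.mem_Icc, Finset.mem_union, Finset.mem_Ico,
      Finset.mem_Ioc]
    omega
  have hdisj : Disjoint (Ico 1 j) (Ioc j d) := by
    rw [Finset.disjoint_left]
    intro x hx hx'
    simp only [Finset.mem_Ico, Finset.mem_Ioc] at hx hx'
    omega
  rw [hsplit, Finset.prod_union hdisj]
  have hL : (∏ i ∈ Ico 1 j, |(j:ℝ) - (i:ℝ)|) = ((j-1).factorial : ℝ) := by
    have : ∀ i ∈ Ico 1 j, |(j:ℝ) - (i:ℝ)| = (((j - i : ℕ)) : ℝ) := by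
      intro i hi
      simp only [Finset.mem_Ico] at hi
      rw [Nat.cast_sub (by omega), abs_of_nonneg]
      have : (i:ℝ) ≤ (j:ℝ) := by exact_mod_cast hi.2.le
      linarith
    rw [Finset.prod_congr rfl this, ← Nat.cast_prod]
    congr 1
    have hbij : (∏ i ∈ Ico 1 j, (j - i)) = ∏ i ∈ Ico 1 j, i := by
      apply Finset.prod_nbij' (fun i => j - i) (fun i => j - i)
      all_goals intro a ha <;> simp only [Finset.mem_Ico] at * <;> omega
    rw [hbij, show Ico 1 j = Icc 1 (j-1) by ext x; simp only [Finset.mem_Ico, Finset.mem_Icc]; omega]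
    exact prod_Icc_id (j-1)
  have hR : (∏ i ∈ Ioc j d, |(j:ℝ) - (i:ℝ)|) = ((d-j).factorial : ℝ) := by
    have : ∀ i ∈ Ioc j d, |(j:ℝ) - (i:ℝ)| = (((i - j : ℕ)) : ℝ) := by
      intro i hi
      simp only [Finset.mem_Ioc] at hi
      rw [Nat.cast_sub (by omega), abs_sub_comm, abs_of_nonneg]
      have : (j:ℝ) ≤ (i:ℝ) := by exact_mod_cast hi.1.le
      linarith
    rw [Finset.prod_congr rfl this, ← Nat.cast_prod]
    congr 1
    have hbij : (∏ i ∈ Ioc j d, (i - j)) = ∏ i ∈ Icc 1 (d-j), i := by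
      apply Finset.prod_nbij' (fun i => i - j) (fun i => i + j)
      all_goals intro a ha <;> simp only [Finset.mem_Ioc, Finset.mem_Icc] at * <;> omega
    rw [hbij]
    exact prod_Icc_id (d-j)
  rw [hL, hR]

-- sum of binomials
lemma sum_choose_Icc (d : ℕ) (hd : 1 ≤ d) :
    (∑ j ∈ Icc 1 d, (d-1).choose (j-1)) = 2^(d-1) := by
  have : (∑ j ∈ Icc 1 d, (d-1).choose (j-1)) = ∑ k ∈ range d, (d-1).choose k := by
    apply Finset.sum_nbij' (fun j => j - 1) (fun k => k + 1)
    all_goals intro a ha <;>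
      simp only [Finset.mem_Icc, Finset.mem_range] at * <;> first | omega | (congr 1; omega)
  rw [this]
  conv_lhs => rw [show d = (d-1)+1 by omega]
  exact Nat.sum_range_choose (d-1)

lemma key4 (d : ℕ) (hd : 4 ≤ d) :
    ((2*d).choose d : ℝ) * 2^(d-1) * (2*π) ≤ (3*Real.exp 1)^d := by
  set E := Real.exp 1 with hE
  have hEpos : 0 < E := Real.exp_pos 1
  have hd1 : 1 ≤ d := by omega
  have hdR : (4:ℝ) ≤ (d:ℝ) := by exact_mod_cast hd
  set s : ℝ := ((d:ℝ)/E)^d with hs_def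
  have hs : 0 < s := by positivity
  set t : ℝ := Real.sqrt d with ht_def
  have ht2 : t^2 = (d:ℝ) := Real.sq_sqrt (by linarith)
  have ht : 2 ≤ t := by
    rw [ht_def, show (2:ℝ) = Real.sqrt 4 by rw [show (4:ℝ) = 2^2 by norm_num, Real.sqrt_sq]; norm_num]
    exact Real.sqrt_le_sqrt hdR
  have htpos : 0 < t := by linarith
  -- rewrite the sqrt's
  have hsq2 : Real.sqrt (2*(d:ℝ)) = Real.sqrt 2 * t := by
    rw [ht_def, Real.sqrt_mul (by norm_num)]
  have hsq4 : Real.sqrt (2*((2*d:ℕ):ℝ)) = 2 * t := by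
    push_cast
    rw [show (2:ℝ)*(2*(d:ℝ)) = 4 * (d:ℝ) by ring, show (4:ℝ) = 2^2 by norm_num,
      Real.sqrt_mul (by positivity), Real.sqrt_sq (by norm_num)]
  have hpow : (((2*d:ℕ):ℝ)/E)^(2*d) = 4^d * s^2 := by
    push_cast
    rw [hs_def, ← pow_mul, show d*2 = 2*d by ring, show (2*(d:ℝ))/E = 2*((d:ℝ)/E) by ring,
      mul_pow]
    congr 1
    rw [pow_mul]
    norm_num
  have hfl := fact_lb d hd1
  have hfu := fact_ub (2*d) (by omega)
  rw [hsq2] at hfl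
  rw [hsq4, hpow] at hfu
  have hch : ((2*d).choose d : ℝ) * ((d.factorial:ℝ) * (d.factorial:ℝ)) = ((2*d).factorial : ℝ) := by
    have := Nat.choose_mul_factorial_mul_factorial (show d ≤ 2*d by omega)
    rw [show 2*d - d = d by omega] at this
    rw [← mul_assoc]
    exact_mod_cast this
  have hsqrtpi : Real.sqrt π ^ 2 = π := Real.sq_sqrt Real.pi_pos.le
  have hsqrt2 : Real.sqrt 2 ^ 2 = 2 := Real.sq_sqrt (by norm_num)
  have hsqrt2pos : 0 < Real.sqrt 2 := by positivity
  have hfactpos : (0:ℝ) < (d.factorial : ℝ) := by positivity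
  -- lower bound on (d!)^2
  have hA : π * 2 * t^2 * s^2 ≤ (d.factorial:ℝ) * (d.factorial:ℝ) := by
    have h0 : 0 ≤ Real.sqrt π * (Real.sqrt 2 * t * s) := by positivity
    calc π * 2 * t^2 * s^2 = (Real.sqrt π * (Real.sqrt 2 * t * s))^2 := by
          rw [mul_pow, mul_pow, mul_pow, hsqrtpi, hsqrt2]; ring
      _ ≤ (d.factorial:ℝ) * (d.factorial:ℝ) := by
          rw [sq]; exact mul_le_mul hfl hfl h0 hfactpos.le
  -- upper bound on choose
  have hC : ((2*d).choose d : ℝ) * (π * 2 * t^2 * s^2) ≤ (E/Real.sqrt 2) * (2*t*(4^d*s^2)) := by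
    calc ((2*d).choose d : ℝ) * (π * 2 * t^2 * s^2)
        ≤ ((2*d).choose d : ℝ) * ((d.factorial:ℝ) * (d.factorial:ℝ)) :=
          mul_le_mul_of_nonneg_left hA (by positivity)
      _ = ((2*d).factorial : ℝ) := hch
      _ ≤ _ := hfu
  have hEt : E ≤ Real.sqrt 2 * t := by
    have h2d : E^2 ≤ 2 * t^2 := by
      nlinarith [Real.exp_one_lt_d9, ht2, hdR]
    have h := Real.sqrt_le_sqrt h2d
    rwa [Real.sqrt_sq hEpos.le, Real.sqrt_mul (by norm_num : (0:ℝ) ≤ 2), Real.sqrt_sq htpos.le] at h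
  have h8 : (8:ℝ)^d = 4^d * 2^(d-1) * 2 := by
    have h2 : (2:ℝ)^d = 2^(d-1)*2 := by
      rw [← pow_succ]; congr 1; omega
    rw [show (8:ℝ) = 4*2 by norm_num, mul_pow, h2]; ring
  have hP : (0:ℝ) < π * 2 * t^2 * s^2 := by positivity
  have goal8 : ((2*d).choose d : ℝ) * 2^(d-1) * (2*π) ≤ (8:ℝ)^d := by
    rw [← mul_le_mul_iff_of_pos_right hP]
    calc ((2*d).choose d : ℝ) * 2^(d-1) * (2*π) * (π * 2 * t^2 * s^2)
        = (((2*d).choose d : ℝ) * (π * 2 * t^2 * s^2)) * (2^(d-1) * (2*π)) := by ring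
      _ ≤ ((E/Real.sqrt 2) * (2*t*(4^d*s^2))) * (2^(d-1) * (2*π)) := by
          apply mul_le_mul_of_nonneg_right hC (by positivity)
      _ ≤ (8:ℝ)^d * (π * 2 * t^2 * s^2) := by
          rw [h8]
          have hEd : E / Real.sqrt 2 ≤ t := by
            rw [div_le_iff₀ hsqrt2pos]
            nlinarith [hEt]
          calc (E/Real.sqrt 2) * (2*t*(4^d*s^2)) * (2^(d-1) * (2*π))
              = ((E/Real.sqrt 2)*(2*t)) * (4^d * s^2 * 2^(d-1) * (2*π)) := by ring
            _ ≤ (t*(2*t)) * (4^d * s^2 * 2^(d-1) * (2*π)) := by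
                apply mul_le_mul_of_nonneg_right _ (by positivity)
                exact mul_le_mul_of_nonneg_right hEd (by positivity)
            _ = 4^d * 2^(d-1) * 2 * (π * 2 * t^2 * s^2) := by ring
  have h38 : (8:ℝ)^d ≤ (3*E)^d := by
    apply pow_le_pow_left₀ (by norm_num)
    have := Real.exp_one_gt_d9
    rw [hE]; linarith

  linarith

lemma term_bound (d j : ℕ) (hj1 : 1 ≤ j) (hj2 : j ≤ d) :
    (∏ i ∈ (Icc 1 d).erase j, ((d:ℝ)+(i:ℝ))) *
      (∏ i ∈ (Icc 1 d).erase j, |(j:ℝ)-(i:ℝ)|)⁻¹ ≤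
    ((2*d).factorial : ℝ) / ((d.factorial:ℝ) * (d.factorial:ℝ)) * (((d-1).choose (j-1) : ℕ) : ℝ) := by
  have hFdpos : (0:ℝ) < (d.factorial:ℝ) := by positivity
  have hFDpos : (0:ℝ) < ((d-1).factorial:ℝ) := by positivity
  have hF1pos : (0:ℝ) < ((j-1).factorial:ℝ) := by positivity
  have hF2pos : (0:ℝ) < ((d-j).factorial:ℝ) := by positivity
  have hdj : (0:ℝ) < (d:ℝ)+(j:ℝ) := by
    have : (0:ℝ) < (j:ℝ) := by exact_mod_cast hj1
    positivity
  have hCjpos : (0:ℝ) < (((d-1).choose (j-1) : ℕ) : ℝ) := by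
    exact_mod_cast Nat.choose_pos (show j-1 ≤ d-1 by omega)
  have hmem : j ∈ Icc 1 d := Finset.mem_Icc.mpr ⟨hj1, hj2⟩
  have hPn : (d.factorial:ℝ) * (((d:ℝ)+(j:ℝ)) * ∏ i ∈ (Icc 1 d).erase j, ((d:ℝ)+(i:ℝ)))
      = ((2*d).factorial : ℝ) := by
    have hn : d.factorial * ((d+j) * ∏ i ∈ (Icc 1 d).erase j, (d+i)) = (2*d).factorial := by
      rw [Finset.mul_prod_erase _ _ hmem]
      exact fact_mul_prod d
    exact_mod_cast hn
  have hCj : (((d-1).choose (j-1) : ℕ) : ℝ) * ((j-1).factorial:ℝ) * ((d-j).factorial:ℝ)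
      = ((d-1).factorial:ℝ) := by
    have := Nat.choose_mul_factorial_mul_factorial (show j-1 ≤ d-1 by omega)
    rw [show d-1-(j-1) = d-j by omega] at this
    exact_mod_cast this
  have hdd : (d:ℝ) * ((d-1).factorial:ℝ) = (d.factorial:ℝ) := by
    exact_mod_cast Nat.mul_factorial_pred (show d ≠ 0 by omega)
  rw [denom_eq d j hj1 hj2]
  have e1 : (∏ i ∈ (Icc 1 d).erase j, ((d:ℝ)+(i:ℝ)))
      = ((2*d).factorial : ℝ) / ((d.factorial:ℝ) * ((d:ℝ)+(j:ℝ))) := by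
    rw [eq_div_iff (by positivity)]
    linear_combination hPn
  have e2 : (((j-1).factorial:ℝ) * ((d-j).factorial:ℝ))⁻¹
      = (((d-1).choose (j-1) : ℕ) : ℝ) / ((d-1).factorial:ℝ) := by
    rw [eq_div_iff hFDpos.ne', inv_mul_eq_div, div_eq_iff (by positivity)]
    linear_combination hCj.symm
  rw [e1, e2, div_mul_div_comm,
    show ((2*d).factorial : ℝ) / ((d.factorial:ℝ)*(d.factorial:ℝ)) * (((d-1).choose (j-1) : ℕ) : ℝ)
      = ((2*d).factorial : ℝ) * (((d-1).choose (j-1) : ℕ) : ℝ) / ((d.factorial:ℝ)*(d.factorial:ℝ)) by ring,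
    div_le_div_iff₀ (by positivity) (by positivity)]
  apply mul_le_mul_of_nonneg_left _ (by positivity)
  have h4 : (d.factorial:ℝ)*(d.factorial:ℝ) = (d.factorial:ℝ)*(d:ℝ)*((d-1).factorial:ℝ) := by
    rw [mul_assoc, hdd]
  rw [h4]
  have hdle : (d:ℝ) ≤ (d:ℝ)+(j:ℝ) := by
    have : (0:ℝ) ≤ (j:ℝ) := by positivity
    linarith
  calc (d.factorial:ℝ)*(d:ℝ)*((d-1).factorial:ℝ)
      ≤ (d.factorial:ℝ)*((d:ℝ)+(j:ℝ))*((d-1).factorial:ℝ) := by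
        apply mul_le_mul_of_nonneg_right _ hFDpos.le
        exact mul_le_mul_of_nonneg_left hdle hFdpos.le
    _ = (d.factorial:ℝ)*((d:ℝ)+(j:ℝ))*((d-1).factorial:ℝ) := rfl

lemma master (d : ℕ) (hd : 1 ≤ d) :
    ∑ j ∈ Icc 1 d, (∏ i ∈ (Icc 1 d).erase j, ((d:ℝ)+(i:ℝ))) *
      (∏ i ∈ (Icc 1 d).erase j, |(j:ℝ)-(i:ℝ)|)⁻¹ ≤ (3*Real.exp 1)^d / (2*π) := by
  have hπ : (0:ℝ) < 2*π := by positivity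
  have hE := Real.exp_one_gt_d9
  have hπ' := Real.pi_lt_d2
  have hπ'' := Real.pi_gt_three
  by_cases hd4 : 4 ≤ d
  · calc ∑ j ∈ Icc 1 d, (∏ i ∈ (Icc 1 d).erase j, ((d:ℝ)+(i:ℝ))) *
          (∏ i ∈ (Icc 1 d).erase j, |(j:ℝ)-(i:ℝ)|)⁻¹
        ≤ ∑ j ∈ Icc 1 d, ((2*d).factorial : ℝ) / ((d.factorial:ℝ) * (d.factorial:ℝ)) *
            (((d-1).choose (j-1) : ℕ) : ℝ) := by
          apply Finset.sum_le_sum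
          intro j hj
          simp only [Finset.mem_Icc] at hj
          exact term_bound d j hj.1 hj.2
      _ = ((2*d).factorial : ℝ) / ((d.factorial:ℝ) * (d.factorial:ℝ)) * 2^(d-1) := by
          rw [← Finset.mul_sum]
          congr 1
          rw [← Nat.cast_sum, sum_choose_Icc d hd]
          push_cast
          ring
      _ = ((2*d).choose d : ℝ) * 2^(d-1) := by
          congr 1
          rw [div_eq_iff (by positivity)]
          have := Nat.choose_mul_factorial_mul_factorial (show d ≤ 2*d by omega)
          rw [show 2*d-d = d by omega] at this
          rw [← mul_assoc]
          exact_mod_cast this.symm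
      _ ≤ (3*Real.exp 1)^d / (2*π) := by
          rw [le_div_iff₀ hπ]
          exact key4 d hd4
  · interval_cases d
    · -- d = 1
      rw [show (Icc 1 1 : Finset ℕ) = {1} from rfl]
      rw [Finset.sum_singleton, show ({1} : Finset ℕ).erase 1 = ∅ from rfl]
      simp only [Finset.prod_empty, inv_one, mul_one]
      rw [le_div_iff₀ hπ]
      nlinarith
    · -- d = 2
      rw [show (Icc 1 2 : Finset ℕ) = {1, 2} from rfl]
      rw [Finset.sum_insert (by decide), Finset.sum_singleton,
        show ({1,2} : Finset ℕ).erase 1 = {2} from rfl,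
        show ({1,2} : Finset ℕ).erase 2 = {1} from rfl]
      simp only [Finset.prod_singleton]
      norm_num
      rw [le_div_iff₀ hπ]
      nlinarith
    · -- d = 3
      rw [show (Icc 1 3 : Finset ℕ) = {1, 2, 3} from rfl]
      rw [Finset.sum_insert (by decide), Finset.sum_insert (by decide), Finset.sum_singleton,
        show ({1,2,3} : Finset ℕ).erase 1 = {2,3} from rfl,
        show ({1,2,3} : Finset ℕ).erase 2 = {1,3} from rfl,
        show ({1,2,3} : Finset ℕ).erase 3 = {1,2} from rfl]
      rw [Finset.prod_insert (by decide), Finset.prod_singleton,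
        Finset.prod_insert (by decide), Finset.prod_singleton,
        Finset.prod_insert (by decide), Finset.prod_singleton,
        Finset.prod_insert (by decide), Finset.prod_singleton,
        Finset.prod_insert (by decide), Finset.prod_singleton,
        Finset.prod_insert (by decide), Finset.prod_singleton]
      norm_num
      rw [le_div_iff₀ hπ]
      have hE3 : (2.7182818283:ℝ)^3 < (Real.exp 1)^3 := by
        exact pow_lt_pow_left₀ hE (by norm_num) (by norm_num)
      nlinarith [hE3]

lemma coeff_prod_linear_bound {ι : Type*} [DecidableEq ι] (s : Finset ι) (c a : ι → ℝ)
    (hc : ∀ i ∈ s, 0 ≤ c i) (ha : ∀ i ∈ s, 0 ≤ a i) :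
    ∀ ℓ : ℕ, |(∏ i ∈ s, (Polynomial.C (c i) * X - Polynomial.C (a i))).coeff ℓ| ≤
      ∏ i ∈ s, (c i + a i) := by
  induction s using Finset.induction_on with
  | empty =>
    intro ℓ
    simp only [Finset.prod_empty]
    rcases Nat.eq_zero_or_pos ℓ with h | h
    · subst h; simp
    · rw [Polynomial.coeff_one, if_neg (by omega)]
      simp
  | @insert x s' hx ih =>
    intro ℓ
    have hcx : 0 ≤ c x := hc x (Finset.mem_insert_self x s')
    have hax : 0 ≤ a x := ha x (Finset.mem_insert_self x s')
    have hc' : ∀ i ∈ s', 0 ≤ c i := fun i hi => hc i (Finset.mem_insert_of_mem hi)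
    have ha' : ∀ i ∈ s', 0 ≤ a i := fun i hi => ha i (Finset.mem_insert_of_mem hi)
    have ih' := ih hc' ha'
    have hprodnn : (0:ℝ) ≤ ∏ i ∈ s', (c i + a i) :=
      Finset.prod_nonneg (fun i hi => by linarith [hc' i hi, ha' i hi])
    rw [Finset.prod_insert hx, Finset.prod_insert hx]
    clear hx
    set q := ∏ i ∈ s', (Polynomial.C (c i) * X - Polynomial.C (a i)) with hq
    have hexp : ((Polynomial.C (c x) * X - Polynomial.C (a x)) * q).coeff ℓ
        = c x * (X * q).coeff ℓ - a x * q.coeff ℓ := by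
      rw [sub_mul, Polynomial.coeff_sub, mul_assoc, Polynomial.coeff_C_mul,
        Polynomial.coeff_C_mul]
    rw [hexp]
    have hXq : |(X * q).coeff ℓ| ≤ ∏ i ∈ s', (c i + a i) := by
      rcases Nat.eq_zero_or_pos ℓ with h | h
      · subst h; rw [Polynomial.coeff_X_mul_zero]; simpa using hprodnn
      · obtain ⟨m, rfl⟩ := Nat.exists_eq_add_of_lt h
        rw [show 0 + m + 1 = m + 1 by omega, Polynomial.coeff_X_mul]
        exact ih' m
    calc |c x * (X * q).coeff ℓ - a x * q.coeff ℓ|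
        ≤ |c x * (X * q).coeff ℓ| + |a x * q.coeff ℓ| := abs_sub _ _
      _ = c x * |(X * q).coeff ℓ| + a x * |q.coeff ℓ| := by
          rw [abs_mul, abs_mul, abs_of_nonneg hcx, abs_of_nonneg hax]
      _ ≤ c x * (∏ i ∈ s', (c i + a i)) + a x * (∏ i ∈ s', (c i + a i)) := by
          have h1 := mul_le_mul_of_nonneg_left hXq hcx
          have h2 := mul_le_mul_of_nonneg_left (ih' ℓ) hax
          linarith
      _ = (c x + a x) * ∏ i ∈ s', (c i + a i) := by ring

/-- The Lagrange interpolation polynomial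
`p(x) = Σ_{j=1}^d λ_j ∏_{i≠j} (d·x − i)/(j − i)` of points `(j/d, λ_j)` with
`|λ_j| ≤ log b` has degree at most `d−1`, interpolates the data, and all of its
coefficients are bounded in absolute value by `(3e)^d (log b)/(2π)`. -/
theorem lagrange_interpolation_coeff_bound (d : ℕ) (hd : 1 ≤ d) (b : ℝ) (hb : 1 ≤ b)
    (lam : ℕ → ℝ) (hlam : ∀ j ∈ Finset.Icc 1 d, |lam j| ≤ Real.log b)
    (p : Polynomial ℝ)
    (hp : p = ∑ j ∈ Finset.Icc 1 d, Polynomial.C (lam j) *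
        ∏ i ∈ (Finset.Icc 1 d).erase j,
          Polynomial.C (((j : ℝ) - (i : ℝ))⁻¹) *
            (Polynomial.C (d : ℝ) * Polynomial.X - Polynomial.C (i : ℝ))) :
    p.natDegree ≤ d - 1 ∧
    (∀ i ∈ Finset.Icc 1 d, p.eval ((i : ℝ) / (d : ℝ)) = lam i) ∧
    (∀ ℓ : ℕ, |p.coeff ℓ| ≤ (3 * Real.exp 1) ^ d * Real.log b / (2 * π)) := by
  subst hp
  have hd0 : (d:ℝ) ≠ 0 := by
    have : (0:ℕ) < d := hd
    exact_mod_cast this.ne'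
  have hcard : ∀ j ∈ Icc 1 d, ((Icc 1 d).erase j).card = d - 1 := by
    intro j hj
    rw [Finset.card_erase_of_mem hj, Nat.card_Icc]
    omega
  refine ⟨?_, ?_, ?_⟩
  · -- degree
    apply Polynomial.natDegree_sum_le_of_forall_le
    intro j hj
    refine (Polynomial.natDegree_C_mul_le _ _).trans ?_
    refine (Polynomial.natDegree_prod_le _ _).trans ?_
    calc ∑ i ∈ (Icc 1 d).erase j,
          (Polynomial.C (((j : ℝ) - (i : ℝ))⁻¹) *
            (Polynomial.C (d : ℝ) * Polynomial.X - Polynomial.C (i : ℝ))).natDegree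
        ≤ ∑ i ∈ (Icc 1 d).erase j, 1 := by
          apply Finset.sum_le_sum
          intro i hi
          refine (Polynomial.natDegree_C_mul_le _ _).trans ?_
          rw [sub_eq_add_neg, ← Polynomial.C_neg]
          exact Polynomial.natDegree_linear_le
      _ = d - 1 := by rw [Finset.sum_const, smul_eq_mul, mul_one, hcard j hj]
  · -- interpolation
    intro i hi
    rw [Polynomial.eval_finset_sum, Finset.sum_eq_single_of_mem i hi]
    · rw [Polynomial.eval_mul, Polynomial.eval_C, Polynomial.eval_prod]
      have hone : ∀ k ∈ (Icc 1 d).erase i,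
          Polynomial.eval ((i:ℝ)/(d:ℝ))
            (Polynomial.C (((i : ℝ) - (k : ℝ))⁻¹) *
              (Polynomial.C (d : ℝ) * Polynomial.X - Polynomial.C (k : ℝ))) = 1 := by
        intro k hk
        have hki : k ≠ i := Finset.ne_of_mem_erase hk
        have hne : (i:ℝ) - (k:ℝ) ≠ 0 := by
          rw [sub_ne_zero]
          exact_mod_cast (Ne.symm hki)
        simp only [Polynomial.eval_mul, Polynomial.eval_C, Polynomial.eval_sub,
          Polynomial.eval_X]
        rw [mul_div_cancel₀ _ hd0]
        exact inv_mul_cancel₀ hne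
      rw [Finset.prod_congr rfl hone, Finset.prod_const_one, mul_one]
    · intro j hj hne
      rw [Polynomial.eval_mul, Polynomial.eval_prod]
      have hmem : i ∈ (Icc 1 d).erase j := Finset.mem_erase.mpr ⟨hne.symm, hi⟩
      have hzero : Polynomial.eval ((i:ℝ)/(d:ℝ))
          (Polynomial.C (((j : ℝ) - (i : ℝ))⁻¹) *
            (Polynomial.C (d : ℝ) * Polynomial.X - Polynomial.C (i : ℝ))) = 0 := by
        simp only [Polynomial.eval_mul, Polynomial.eval_C, Polynomial.eval_sub,
          Polynomial.eval_X]
        rw [mul_div_cancel₀ _ hd0]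
        simp
      rw [Finset.prod_eq_zero hmem hzero, mul_zero]
  · -- coefficient bound
    intro ℓ
    have hlog : 0 ≤ Real.log b := Real.log_nonneg hb
    rw [Polynomial.finset_sum_coeff]
    calc |∑ j ∈ Icc 1 d, (Polynomial.C (lam j) *
            ∏ i ∈ (Icc 1 d).erase j,
              Polynomial.C (((j : ℝ) - (i : ℝ))⁻¹) *
                (Polynomial.C (d : ℝ) * Polynomial.X - Polynomial.C (i : ℝ))).coeff ℓ|
        ≤ ∑ j ∈ Icc 1 d, |(Polynomial.C (lam j) *
            ∏ i ∈ (Icc 1 d).erase j,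
              Polynomial.C (((j : ℝ) - (i : ℝ))⁻¹) *
                (Polynomial.C (d : ℝ) * Polynomial.X - Polynomial.C (i : ℝ))).coeff ℓ| :=
          Finset.abs_sum_le_sum_abs _ _
      _ ≤ ∑ j ∈ Icc 1 d, Real.log b * ((∏ i ∈ (Icc 1 d).erase j, ((d:ℝ)+(i:ℝ))) *
            (∏ i ∈ (Icc 1 d).erase j, |(j:ℝ)-(i:ℝ)|)⁻¹) := by
          apply Finset.sum_le_sum
          intro j hj
          have hsplit : (∏ i ∈ (Icc 1 d).erase j,
              Polynomial.C (((j : ℝ) - (i : ℝ))⁻¹) *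
                (Polynomial.C (d : ℝ) * Polynomial.X - Polynomial.C (i : ℝ)))
              = Polynomial.C (∏ i ∈ (Icc 1 d).erase j, ((j : ℝ) - (i : ℝ))⁻¹) *
                ∏ i ∈ (Icc 1 d).erase j,
                  (Polynomial.C (d : ℝ) * Polynomial.X - Polynomial.C (i : ℝ)) := by
            rw [Finset.prod_mul_distrib]
            congr 1
            exact (map_prod (Polynomial.C : ℝ →+* Polynomial ℝ) _ _).symm
          rw [hsplit, ← mul_assoc, ← Polynomial.C_mul, Polynomial.coeff_C_mul, abs_mul,
            abs_mul]
          have h1 : |lam j| ≤ Real.log b := hlam j hj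
          have h2 : |∏ i ∈ (Icc 1 d).erase j, ((j : ℝ) - (i : ℝ))⁻¹|
              = (∏ i ∈ (Icc 1 d).erase j, |(j:ℝ)-(i:ℝ)|)⁻¹ := by
            rw [Finset.abs_prod, ← Finset.prod_inv_distrib]
            exact Finset.prod_congr rfl (fun i _ => abs_inv _)
          have h3 : |(∏ i ∈ (Icc 1 d).erase j,
              (Polynomial.C (d : ℝ) * Polynomial.X - Polynomial.C (i : ℝ))).coeff ℓ|
              ≤ ∏ i ∈ (Icc 1 d).erase j, ((d:ℝ)+(i:ℝ)) := by
            exact coeff_prod_linear_bound ((Icc 1 d).erase j) (fun _ => (d:ℝ)) (fun i => (i:ℝ))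
              (fun i _ => Nat.cast_nonneg _) (fun i _ => by simp) ℓ
          rw [h2]
          have hinv : (0:ℝ) ≤ (∏ i ∈ (Icc 1 d).erase j, |(j:ℝ)-(i:ℝ)|)⁻¹ := by
            positivity
          calc |lam j| * (∏ i ∈ (Icc 1 d).erase j, |(j:ℝ)-(i:ℝ)|)⁻¹ *
                |(∏ i ∈ (Icc 1 d).erase j,
                  (Polynomial.C (d : ℝ) * Polynomial.X - Polynomial.C (i : ℝ))).coeff ℓ|
              ≤ (Real.log b * (∏ i ∈ (Icc 1 d).erase j, |(j:ℝ)-(i:ℝ)|)⁻¹) *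
                (∏ i ∈ (Icc 1 d).erase j, ((d:ℝ)+(i:ℝ))) := by
                apply mul_le_mul _ h3 (abs_nonneg _) (by positivity)
                exact mul_le_mul h1 le_rfl hinv hlog
            _ = Real.log b * ((∏ i ∈ (Icc 1 d).erase j, ((d:ℝ)+(i:ℝ))) *
                (∏ i ∈ (Icc 1 d).erase j, |(j:ℝ)-(i:ℝ)|)⁻¹) := by ring
      _ = Real.log b * ∑ j ∈ Icc 1 d, ((∏ i ∈ (Icc 1 d).erase j, ((d:ℝ)+(i:ℝ))) *
            (∏ i ∈ (Icc 1 d).erase j, |(j:ℝ)-(i:ℝ)|)⁻¹) := by rw [Finset.mul_sum]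
      _ ≤ Real.log b * ((3*Real.exp 1)^d / (2*π)) :=
          mul_le_mul_of_nonneg_left (master d hd) hlog
      _ = (3 * Real.exp 1) ^ d * Real.log b / (2 * π) := by ring
end

section
/- For positive definite matrices ρ and σ on a finite-dimensional Hilbert space, the supremum over 0 ≤ M ≤ I of log(Tr[Mρ]/Tr[Mσ]) equals D_max(ρ‖σ) := log ‖σ^{−1/2} ρ σ^{−1/2}‖ = inf { λ ∈ ℝ : ρ ≤ e^λ σ }. -/
open scoped Matrix.Norms.L2Operator
open Matrix
open scoped ComplexOrder

noncomputable instance dmaxMatCStar {d : ℕ} : CStarAlgebra (Matrix (Fin d) (Fin d) ℂ) :=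
  Matrix.instCStarAlgebra

/-- The positive semidefinite square root of a positive semidefinite matrix
(as defined in the older Mathlib, where it has since been removed). -/
noncomputable def Matrix.PosSemidef.sqrt {n 𝕜 : Type*} [RCLike 𝕜] [Fintype n] [DecidableEq n]
    {A : Matrix n n 𝕜} (hA : A.PosSemidef) : Matrix n n 𝕜 :=
  hA.1.eigenvectorUnitary.1 * diagonal ((↑) ∘ (Real.sqrt ∘ hA.1.eigenvalues)) *
  (star hA.1.eigenvectorUnitary : Matrix n n 𝕜)

theorem Matrix.PosSemidef.posSemidef_sqrt {n 𝕜 : Type*} [RCLike 𝕜] [Fintype n] [DecidableEq n]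
    {A : Matrix n n 𝕜} (hA : A.PosSemidef) : hA.sqrt.PosSemidef := by
  unfold Matrix.PosSemidef.sqrt
  have hD : (diagonal ((↑) ∘ (Real.sqrt ∘ hA.1.eigenvalues)) : Matrix n n 𝕜).PosSemidef := by
    refine posSemidef_diagonal_iff.mpr fun i ↦ ?_
    rw [RCLike.nonneg_iff]
    constructor
    · simp only [Function.comp_apply, RCLike.ofReal_re]; exact Real.sqrt_nonneg _
    · simp
  exact PosSemidef.mul_mul_conjTranspose_same hD _

theorem Matrix.PosSemidef.sqrt_mul_self {n 𝕜 : Type*} [RCLike 𝕜] [Fintype n] [DecidableEq n]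
    {A : Matrix n n 𝕜} (hA : A.PosSemidef) : hA.sqrt * hA.sqrt = A := by
  let C : Matrix n n 𝕜 := hA.1.eigenvectorUnitary
  let E := diagonal ((↑) ∘ Real.sqrt ∘ hA.1.eigenvalues : n → 𝕜)
  suffices C * (E * (star C * C) * E) * star C = A by
    change C * E * star C * (C * E * star C) = A
    simpa only [← mul_assoc] using this
  have : star C * C = 1 := by simp [C]
  rw [this, mul_one]
  have : E * E = diagonal ((↑) ∘ hA.1.eigenvalues) := by
    rw [diagonal_mul_diagonal]
    congr! with v
    simp [← pow_two, ← RCLike.ofReal_pow, Real.sq_sqrt (hA.eigenvalues_nonneg v)]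
  rw [this]
  conv_rhs => rw [hA.1.spectral_theorem]
  simp [C]

namespace DmaxAux
variable {d : ℕ}

lemma inner_eq (x y : Fin d → ℂ) :
    (inner ℂ ((WithLp.equiv 2 (Fin d → ℂ)).symm x) ((WithLp.equiv 2 (Fin d → ℂ)).symm y) : ℂ)
      = star x ⬝ᵥ y :=
  by rw [dotProduct_comm]; rfl

lemma dot_self_eq (x : Fin d → ℂ) :
    star x ⬝ᵥ x = ((‖(WithLp.equiv 2 (Fin d → ℂ)).symm x‖ ^ 2 : ℝ) : ℂ) := by
  rw [← inner_eq]; push_cast; exact inner_self_eq_norm_sq_to_K _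

lemma herm_star {A : Matrix (Fin d) (Fin d) ℂ} (hA : A.IsHermitian) (x : Fin d → ℂ) :
    (starRingEnd ℂ) (star x ⬝ᵥ A *ᵥ x) = star x ⬝ᵥ A *ᵥ x := by
  calc (starRingEnd ℂ) (star x ⬝ᵥ A *ᵥ x) = star (star x ⬝ᵥ A *ᵥ x) := rfl
    _ = star (A *ᵥ x) ⬝ᵥ x := by rw [star_dotProduct, star_star]
    _ = star x ᵥ* Aᴴ ⬝ᵥ x := by rw [star_mulVec]
    _ = star x ⬝ᵥ Aᴴ *ᵥ x := (Matrix.dotProduct_mulVec _ _ _).symm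
    _ = star x ⬝ᵥ A *ᵥ x := by rw [hA.eq]

lemma herm_im {A : Matrix (Fin d) (Fin d) ℂ} (hA : A.IsHermitian) (x : Fin d → ℂ) :
    (star x ⬝ᵥ A *ᵥ x).im = 0 :=
  Complex.conj_eq_iff_im.mp (herm_star hA x)

lemma quad_re_le (A : Matrix (Fin d) (Fin d) ℂ) (x : Fin d → ℂ) :
    (star x ⬝ᵥ A *ᵥ x).re ≤ ‖A‖ * ‖(WithLp.equiv 2 (Fin d → ℂ)).symm x‖ ^ 2 := by
  set X := (WithLp.equiv 2 (Fin d → ℂ)).symm x with hX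
  have h1 : star x ⬝ᵥ A *ᵥ x = (inner ℂ X ((WithLp.equiv 2 (Fin d → ℂ)).symm (A *ᵥ x)) : ℂ) :=
    (inner_eq x (A *ᵥ x)).symm
  set Y := (WithLp.equiv 2 (Fin d → ℂ)).symm (A *ᵥ x) with hY
  have h2 : (inner ℂ X Y : ℂ).re ≤ ‖(inner ℂ X Y : ℂ)‖ := Complex.re_le_norm _
  have h3 : ‖(inner ℂ X Y : ℂ)‖ ≤ ‖X‖ * ‖Y‖ := norm_inner_le_norm X Y
  have h4 : ‖Y‖ ≤ ‖A‖ * ‖X‖ := A.l2_opNorm_mulVec X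
  have h5 : ‖X‖ ≥ 0 := norm_nonneg _
  calc (star x ⬝ᵥ A *ᵥ x).re = (inner ℂ X Y : ℂ).re := by rw [h1]
    _ ≤ ‖X‖ * ‖Y‖ := h2.trans h3
    _ ≤ ‖X‖ * (‖A‖ * ‖X‖) := mul_le_mul_of_nonneg_left h4 h5
    _ = ‖A‖ * ‖X‖ ^ 2 := by ring

lemma smul_one_sub_psd {A : Matrix (Fin d) (Fin d) ℂ} (hA : A.IsHermitian) {c : ℝ}
    (h : ‖A‖ ≤ c) : (((c : ℂ) • 1 - A) : Matrix (Fin d) (Fin d) ℂ).PosSemidef := by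
  refine Matrix.PosSemidef.of_dotProduct_mulVec_nonneg ?_ ?_
  · unfold Matrix.IsHermitian
    rw [conjTranspose_sub, conjTranspose_smul, conjTranspose_one, hA.eq]
    simp [Complex.star_def, Complex.conj_ofReal]
  · intro x
    have hform : star x ⬝ᵥ ((c : ℂ) • 1 - A) *ᵥ x
        = (c : ℂ) * (star x ⬝ᵥ x) - star x ⬝ᵥ A *ᵥ x := by
      rw [Matrix.sub_mulVec, dotProduct_sub, Matrix.smul_mulVec, Matrix.one_mulVec,
        dotProduct_smul, smul_eq_mul]
    rw [hform, dot_self_eq]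
    set r := ‖(WithLp.equiv 2 (Fin d → ℂ)).symm x‖ with hr
    have him : (star x ⬝ᵥ A *ᵥ x).im = 0 := herm_im hA x
    have hre : (star x ⬝ᵥ A *ᵥ x).re ≤ ‖A‖ * r ^ 2 := quad_re_le A x
    rw [Complex.le_def]
    constructor
    · simp only [Complex.sub_re, Complex.mul_re, Complex.ofReal_re, Complex.ofReal_im,
        Complex.zero_re, mul_zero, zero_mul, sub_zero]
      have : ‖A‖ * r ^ 2 ≤ c * r ^ 2 :=
        mul_le_mul_of_nonneg_right h (by positivity)
      nlinarith [hre]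
    · simp [Complex.sub_im, Complex.mul_im, him, ← Complex.ofReal_pow]

lemma exists_eigenvec {A : Matrix (Fin d) (Fin d) ℂ} (hA : A.PosSemidef) (hd : 0 < d) :
    ∃ v : Fin d → ℂ, v ≠ 0 ∧ A *ᵥ v = ((‖A‖ : ℂ)) • v := by
  haveI : Nonempty (Fin d) := ⟨⟨0, hd⟩⟩
  haveI : Nontrivial (Matrix (Fin d) (Fin d) ℂ) := inferInstance
  obtain ⟨z, hz, hz2⟩ := spectrum.exists_nnnorm_eq_spectralRadius (a := A)
  have hzn : ‖z‖ = ‖A‖ := by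
    have hsa : IsSelfAdjoint A := hA.1
    rw [hsa.spectralRadius_eq_nnnorm] at hz2
    exact_mod_cast congrArg ENNReal.toReal hz2
  rw [spectrum.mem_iff] at hz
  have hdet : (z • (1 : Matrix (Fin d) (Fin d) ℂ) - A).det = 0 := by
    by_contra h
    exact hz (by
      rw [show (algebraMap ℂ (Matrix (Fin d) (Fin d) ℂ)) z = z • 1 by
            simp [Algebra.algebraMap_eq_smul_one]]
      rw [Matrix.isUnit_iff_isUnit_det]
      exact isUnit_iff_ne_zero.mpr h)
  obtain ⟨v, hv0, hv⟩ := (Matrix.exists_mulVec_eq_zero_iff).mpr hdet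
  rw [Matrix.sub_mulVec, sub_eq_zero, Matrix.smul_mulVec, Matrix.one_mulVec] at hv
  have hq := hA.dotProduct_mulVec_nonneg v
  rw [← hv, dotProduct_smul, smul_eq_mul] at hq
  have hsvv : star v ⬝ᵥ v = ((‖(WithLp.equiv 2 (Fin d → ℂ)).symm v‖ ^ 2 : ℝ) : ℂ) :=
    dot_self_eq v
  have hrpos : (0:ℝ) < ‖(WithLp.equiv 2 (Fin d → ℂ)).symm v‖ ^ 2 := by
    have : (WithLp.equiv 2 (Fin d → ℂ)).symm v ≠ 0 := by
      simpa using hv0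
    exact pow_pos (norm_pos_iff.mpr this) 2
  have hz0 : 0 ≤ z := by
    rw [Complex.le_def] at hq ⊢
    obtain ⟨h1, h2⟩ := hq
    rw [hsvv] at h1 h2
    simp only [Complex.zero_re, Complex.zero_im, Complex.mul_re, Complex.mul_im,
      Complex.ofReal_re, Complex.ofReal_im, mul_zero, zero_mul, add_zero, sub_zero] at h1 h2 ⊢
    constructor
    · nlinarith
    · nlinarith
  have hzre : z = ((‖A‖ : ℝ) : ℂ) := by
    rw [Complex.le_def] at hz0
    obtain ⟨h1, h2⟩ := hz0
    have : z = ((z.re : ℝ) : ℂ) := by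
      apply Complex.ext <;> simp [← h2]
    rw [this]
    norm_cast
    rw [← hzn, this]
    rw [Complex.norm_real, Real.norm_eq_abs]
    exact (abs_of_nonneg (by simpa using h1)).symm
  exact ⟨v, hv0, by rw [← hzre, hv]⟩

lemma conj_form (B T : Matrix (Fin d) (Fin d) ℂ) (hT : T.IsHermitian) (v : Fin d → ℂ) :
    star (T *ᵥ v) ⬝ᵥ B *ᵥ (T *ᵥ v) = star v ⬝ᵥ (T * B * T) *ᵥ v := by
  simp [star_mulVec, hT.eq, Matrix.dotProduct_mulVec, Matrix.vecMul_vecMul, mul_assoc]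

lemma outer_psd (w : Fin d → ℂ) : (vecMulVec w (star w)).PosSemidef := by
  refine Matrix.PosSemidef.of_dotProduct_mulVec_nonneg ?_ ?_
  · ext i j
    simp [vecMulVec_apply, conjTranspose_apply, mul_comm]
  · intro x
    have hmv : (vecMulVec w (star w)) *ᵥ x = (star w ⬝ᵥ x) • w := by
      ext i
      simp only [vecMulVec_apply, mulVec, dotProduct, Pi.smul_apply, Pi.star_apply,
        smul_eq_mul, Finset.mul_sum]
      rw [Finset.sum_mul]
      exact Finset.sum_congr rfl fun k _ => by ring
    rw [hmv, dotProduct_smul, smul_eq_mul]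
    have : star x ⬝ᵥ w = star (star w ⬝ᵥ x) := star_dotProduct _ _
    rw [this]
    exact mul_star_self_nonneg _

lemma outer_idem {u : Fin d → ℂ} (hu : star u ⬝ᵥ u = 1) :
    vecMulVec u (star u) * vecMulVec u (star u) = vecMulVec u (star u) := by
  ext i j
  simp only [mul_apply, vecMulVec_apply, Pi.star_apply]
  calc ∑ k, u i * star (u k) * (u k * star (u j))
      = ∑ k, (u i * star (u j)) * (star (u k) * u k) := by
        refine Finset.sum_congr rfl fun k _ => by ring
    _ = (u i * star (u j)) * (star u ⬝ᵥ u) := by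
        rw [← Finset.mul_sum]; rfl
    _ = u i * star (u j) := by rw [hu, mul_one]

lemma norm_le_one_of_idem {M : Matrix (Fin d) (Fin d) ℂ} (hM : M.IsHermitian)
    (hMM : M * M = M) : ‖M‖ ≤ 1 := by
  have h := Matrix.l2_opNorm_conjTranspose_mul_self M
  rw [hM.eq, hMM] at h
  nlinarith [norm_nonneg M]

lemma trace_outer_mul (u : Fin d → ℂ) (B : Matrix (Fin d) (Fin d) ℂ) :
    (vecMulVec u (star u) * B).trace = star u ⬝ᵥ B *ᵥ u := by
  simp only [Matrix.trace, Matrix.diag, mul_apply, vecMulVec_apply, dotProduct, mulVec,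
    Pi.star_apply]
  rw [Finset.sum_comm]
  refine Finset.sum_congr rfl fun j _ => ?_
  rw [Finset.mul_sum]
  refine Finset.sum_congr rfl fun i _ => by ring

lemma diag_quad {N : Matrix (Fin d) (Fin d) ℂ} (hN : N.IsHermitian)
    (B : Matrix (Fin d) (Fin d) ℂ) (i : Fin d) :
    (N * B * N) i i = star (fun j => N j i) ⬝ᵥ B *ᵥ (fun j => N j i) := by
  simp only [mul_apply, dotProduct, mulVec, Pi.star_apply, Finset.sum_mul, Finset.mul_sum]
  rw [Finset.sum_comm]
  refine Finset.sum_congr rfl fun j _ => Finset.sum_congr rfl fun k _ => ?_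
  rw [hN.apply i j]
  ring

lemma trace_eq_conj {M B : Matrix (Fin d) (Fin d) ℂ} (hM : M.PosSemidef) :
    (M * B).trace = (hM.sqrt * B * hM.sqrt).trace := by
  conv_lhs => rw [← hM.sqrt_mul_self]
  rw [mul_assoc, Matrix.trace_mul_comm, mul_assoc]

lemma trace_mul_re_nonneg {M B : Matrix (Fin d) (Fin d) ℂ} (hM : M.PosSemidef)
    (hB : B.PosSemidef) : 0 ≤ ((M * B).trace).re := by
  rw [trace_eq_conj hM]
  have hNh : (hM.sqrt).IsHermitian := hM.posSemidef_sqrt.1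
  rw [Matrix.trace, Complex.re_sum]
  refine Finset.sum_nonneg fun i _ => ?_
  rw [Matrix.diag, diag_quad hNh B i]
  have := hB.dotProduct_mulVec_nonneg (fun j => hM.sqrt j i)
  rw [Complex.le_def] at this
  simpa using this.1

lemma trace_mul_re_pos {M B : Matrix (Fin d) (Fin d) ℂ} (hM : M.PosSemidef)
    (hM0 : M ≠ 0) (hB : B.PosDef) : 0 < ((M * B).trace).re := by
  rw [trace_eq_conj hM]
  have hNh : (hM.sqrt).IsHermitian := hM.posSemidef_sqrt.1
  rw [Matrix.trace, Complex.re_sum]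
  have hN0 : hM.sqrt ≠ 0 := by
    intro h
    exact hM0 (by rw [← hM.sqrt_mul_self, h, mul_zero])
  have hcol : ∃ i, (fun j => hM.sqrt j i) ≠ (0 : Fin d → ℂ) := by
    by_contra h
    push_neg at h
    apply hN0
    ext j i
    have := congrFun (h i) j
    simpa using this
  obtain ⟨i0, hi0⟩ := hcol
  refine Finset.sum_pos' (fun i _ => ?_) ⟨i0, Finset.mem_univ i0, ?_⟩
  · rw [Matrix.diag, diag_quad hNh B i]
    have := hB.posSemidef.dotProduct_mulVec_nonneg (fun j => hM.sqrt j i)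
    rw [Complex.le_def] at this
    simpa using this.1
  · rw [Matrix.diag, diag_quad hNh B i0]
    have := hB.dotProduct_mulVec_pos hi0
    rw [Complex.lt_def] at this
    simpa using this.1

lemma quad_smul (B : Matrix (Fin d) (Fin d) ℂ) (w : Fin d → ℂ) (t : ℝ) :
    star ((t:ℂ) • w) ⬝ᵥ B *ᵥ ((t:ℂ) • w) = ((t*t : ℝ):ℂ) * (star w ⬝ᵥ B *ᵥ w) := by
  rw [Matrix.mulVec_smul, dotProduct_smul, star_smul, smul_dotProduct]
  push_cast
  simp [smul_eq_mul, Complex.star_def, Complex.conj_ofReal]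
  ring

end DmaxAux

open DmaxAux in
/-- Variational characterization of the max-relative entropy: for positive
definite `ρ, σ`, the supremum of `log(Tr[Mρ]/Tr[Mσ])` over Hermitian `M` with
`0 ≤ M ≤ I` (and `Tr[Mσ] > 0`) equals `log ‖σ^{-1/2} ρ σ^{-1/2}‖`, which in
turn equals `inf {λ : ρ ≤ e^λ σ}` in the Loewner order. -/
theorem dmax_variational {d : ℕ} (hd : 0 < d) (ρ σ : Matrix (Fin d) (Fin d) ℂ)
    (hρ : ρ.PosDef) (hσ : σ.PosDef) :
    sSup {x : ℝ | ∃ M : Matrix (Fin d) (Fin d) ℂ, M.PosSemidef ∧ (1 - M).PosSemidef ∧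
        0 < ((M * σ).trace).re ∧
        x = Real.log (((M * ρ).trace).re / ((M * σ).trace).re)}
      = Real.log ‖(hσ.posSemidef.sqrt)⁻¹ * ρ * (hσ.posSemidef.sqrt)⁻¹‖ ∧
    Real.log ‖(hσ.posSemidef.sqrt)⁻¹ * ρ * (hσ.posSemidef.sqrt)⁻¹‖
      = sInf {lam : ℝ | ((Real.exp lam : ℂ) • σ - ρ).PosSemidef} := by
  set S := hσ.posSemidef.sqrt with hSdef
  have hS : S.PosSemidef := hσ.posSemidef.posSemidef_sqrt
  have hSH : S.IsHermitian := hS.1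
  have hSS : S * S = σ := hσ.posSemidef.sqrt_mul_self
  have hσdet : σ.det ≠ 0 := hσ.det_pos.ne'
  have hSdet : S.det ≠ 0 := by
    intro h
    apply hσdet
    rw [← hSS, Matrix.det_mul, h, zero_mul]
  have hSU : IsUnit S.det := isUnit_iff_ne_zero.mpr hSdet
  set T := S⁻¹ with hTdef
  have hTH : T.IsHermitian := hSH.inv
  have hST : S * T = 1 := Matrix.mul_nonsing_inv S hSU
  have hTS : T * S = 1 := Matrix.nonsing_inv_mul S hSU
  set A := T * ρ * T with hAdef
  have hA : A.PosSemidef := by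
    have h := hρ.posSemidef.conjTranspose_mul_mul_same T
    rwa [hTH.eq] at h
  have hTσT : T * σ * T = 1 := by
    have h1 : T * σ * T = (T * S) * (S * T) := by rw [← hSS]; noncomm_ring
    rw [h1, hTS, hST, one_mul]
  have hSAS : S * A * S = ρ := by
    have h1 : S * A * S = (S * T) * ρ * (T * S) := by rw [hAdef]; noncomm_ring
    rw [h1, hST, hTS, one_mul, mul_one]
  -- A is nonzero
  have hA0 : A ≠ 0 := by
    intro h
    have hρ0 : ρ = 0 := by rw [← hSAS, h, mul_zero, zero_mul]
    have hx : (fun _ => (1:ℂ)) ≠ (0 : Fin d → ℂ) := by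
      intro hxx
      have := congrFun hxx ⟨0, hd⟩
      simpa using this
    have := hρ.dotProduct_mulVec_pos hx
    rw [hρ0] at this
    simp [Matrix.zero_mulVec] at this
  have hnA : (0:ℝ) < ‖A‖ := norm_pos_iff.mpr hA0
  -- the key equivalence
  have key : ∀ c : ℝ, ((c:ℂ) • σ - ρ).PosSemidef ↔ ‖A‖ ≤ c := by
    intro c
    constructor
    · intro h
      have h2 := h.conjTranspose_mul_mul_same T
      rw [hTH.eq] at h2
      have heq : T * ((c:ℂ) • σ - ρ) * T = (c:ℂ) • (1 : Matrix (Fin d) (Fin d) ℂ) - A := by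
        rw [mul_sub, sub_mul, mul_smul_comm, smul_mul_assoc, hTσT]
      rw [heq] at h2
      obtain ⟨v, hv0, hv⟩ := exists_eigenvec hA hd
      have hq := h2.dotProduct_mulVec_nonneg v
      have hform : star v ⬝ᵥ ((c:ℂ) • (1 : Matrix (Fin d) (Fin d) ℂ) - A) *ᵥ v
          = ((c:ℂ) - (‖A‖:ℂ)) * (star v ⬝ᵥ v) := by
        rw [Matrix.sub_mulVec, Matrix.smul_mulVec, Matrix.one_mulVec, hv,
          dotProduct_sub, dotProduct_smul, dotProduct_smul, smul_eq_mul, smul_eq_mul, sub_mul]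
      rw [hform, dot_self_eq v] at hq
      set r := ‖(WithLp.equiv 2 (Fin d → ℂ)).symm v‖ with hrdef
      have hrpos : (0:ℝ) < r ^ 2 := by
        have : (WithLp.equiv 2 (Fin d → ℂ)).symm v ≠ 0 := by simpa using hv0
        exact pow_pos (norm_pos_iff.mpr this) 2
      rw [Complex.le_def] at hq
      obtain ⟨h1, _⟩ := hq
      simp only [Complex.zero_re, Complex.mul_re, Complex.sub_re, Complex.sub_im,
        Complex.ofReal_re, Complex.ofReal_im, ← Complex.ofReal_pow, sub_zero, mul_zero,
        zero_mul, sub_self] at h1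
      nlinarith
    · intro h
      have h1 := smul_one_sub_psd hA.1 h
      have h2 := h1.conjTranspose_mul_mul_same S
      rw [hSH.eq] at h2
      have heq : S * ((c:ℂ) • (1 : Matrix (Fin d) (Fin d) ℂ) - A) * S = (c:ℂ) • σ - ρ := by
        rw [mul_sub, sub_mul, mul_smul_comm, smul_mul_assoc, mul_one, hSS, hSAS]
      rwa [heq] at h2
  constructor
  · -- sSup part
    -- construct the optimal M
    obtain ⟨v, hv0, hv⟩ := exists_eigenvec hA hd
    set w := T *ᵥ v with hwdef
    have hw0 : w ≠ 0 := by
      intro h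
      apply hv0
      calc v = (S * T) *ᵥ v := by rw [hST, Matrix.one_mulVec]
        _ = S *ᵥ w := by rw [← Matrix.mulVec_mulVec]
        _ = 0 := by rw [h, Matrix.mulVec_zero]
    have hww : star w ⬝ᵥ w = ((‖(WithLp.equiv 2 (Fin d → ℂ)).symm w‖ ^ 2 : ℝ) : ℂ) :=
      dot_self_eq w
    set rw2 := ‖(WithLp.equiv 2 (Fin d → ℂ)).symm w‖ ^ 2 with hrw2
    have hrw2pos : (0:ℝ) < rw2 := by
      have : (WithLp.equiv 2 (Fin d → ℂ)).symm w ≠ 0 := by simpa using hw0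
      exact pow_pos (norm_pos_iff.mpr this) 2
    set s := (Real.sqrt rw2)⁻¹ with hsdef
    have hs2 : s * s * rw2 = 1 := by
      rw [hsdef, ← mul_inv]
      rw [Real.mul_self_sqrt hrw2pos.le]
      exact inv_mul_cancel₀ hrw2pos.ne'
    set u := (s:ℂ) • w with hudef
    have hu1 : star u ⬝ᵥ u = 1 := by
      rw [hudef, star_smul, smul_dotProduct, dotProduct_smul, hww]
      simp only [smul_eq_mul, Complex.star_def, Complex.conj_ofReal]
      have h' : (s:ℂ) * s * rw2 = 1 := by exact_mod_cast hs2
      linear_combination h'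
    set M := vecMulVec u (star u) with hMdef
    have hMpsd : M.PosSemidef := outer_psd u
    have hM1 : (1 - M).PosSemidef := by
      have h := smul_one_sub_psd hMpsd.1 (norm_le_one_of_idem hMpsd.1 (outer_idem hu1))
      simpa using h
    have hwσ : star w ⬝ᵥ σ *ᵥ w = star v ⬝ᵥ v := by
      rw [hwdef, conj_form σ T hTH, hTσT, Matrix.one_mulVec]
    have hwρ : star w ⬝ᵥ ρ *ᵥ w = ((‖A‖:ℝ):ℂ) * (star v ⬝ᵥ v) := by
      rw [hwdef, conj_form ρ T hTH, ← hAdef, hv, dotProduct_smul, smul_eq_mul]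
    have hvv : star v ⬝ᵥ v = ((‖(WithLp.equiv 2 (Fin d → ℂ)).symm v‖ ^ 2 : ℝ) : ℂ) :=
      dot_self_eq v
    set nv2 := ‖(WithLp.equiv 2 (Fin d → ℂ)).symm v‖ ^ 2 with hnv2
    have hnv2pos : (0:ℝ) < nv2 := by
      have : (WithLp.equiv 2 (Fin d → ℂ)).symm v ≠ 0 := by simpa using hv0
      exact pow_pos (norm_pos_iff.mpr this) 2
    have hspos : (0:ℝ) < s := by
      rw [hsdef]
      exact inv_pos.mpr (Real.sqrt_pos.mpr hrw2pos)
    have htσre : ((M * σ).trace).re = s * s * nv2 := by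
      rw [hMdef, trace_outer_mul, hudef, quad_smul, hwσ, hvv, ← Complex.ofReal_mul,
        Complex.ofReal_re]
    have htρre : ((M * ρ).trace).re = ‖A‖ * (s * s * nv2) := by
      rw [hMdef, trace_outer_mul, hudef, quad_smul, hwρ, hvv]
      rw [show ((s*s : ℝ):ℂ) * (((‖A‖:ℝ):ℂ) * ((nv2 : ℝ):ℂ))
            = (((‖A‖ * (s * s * nv2)) : ℝ) : ℂ) by push_cast; ring]
      rw [Complex.ofReal_re]
    have hq0 : (0:ℝ) < s * s * nv2 := by positivity
    refine IsGreatest.csSup_eq ⟨⟨M, hMpsd, hM1, ?_, ?_⟩, ?_⟩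
    · rw [htσre]; exact hq0
    · rw [htρre, htσre, mul_div_assoc, div_self hq0.ne', mul_one]
    · rintro x ⟨M', hM', h1M', htσ', hxe'⟩
      have hM'0 : M' ≠ 0 := by
        intro h
        rw [h, zero_mul] at htσ'
        simp at htσ'
      have htρ' : 0 < ((M' * ρ).trace).re := trace_mul_re_pos hM' hM'0 hρ
      have hc : (((‖A‖:ℝ):ℂ) • σ - ρ).PosSemidef := (key ‖A‖).mpr le_rfl
      have h3 := trace_mul_re_nonneg hM' hc
      have hexp : (M' * (((‖A‖:ℝ):ℂ) • σ - ρ)).trace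
          = ((‖A‖:ℝ):ℂ) * (M' * σ).trace - (M' * ρ).trace := by
        rw [mul_sub, mul_smul_comm, Matrix.trace_sub, Matrix.trace_smul, smul_eq_mul]
      rw [hexp] at h3
      simp only [Complex.sub_re, Complex.mul_re, Complex.ofReal_re, Complex.ofReal_im,
        zero_mul, sub_zero] at h3
      have hdiv : ((M' * ρ).trace).re / ((M' * σ).trace).re ≤ ‖A‖ := by
        rw [div_le_iff₀ htσ']
        nlinarith
      rw [hxe']
      calc Real.log (((M' * ρ).trace).re / ((M' * σ).trace).re)
          ≤ Real.log ‖A‖ := by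
            apply Real.log_le_log (div_pos htρ' htσ') hdiv
        _ = Real.log ‖A‖ := rfl
  · -- sInf part
    have hset : {lam : ℝ | ((Real.exp lam : ℂ) • σ - ρ).PosSemidef}
        = Set.Ici (Real.log ‖A‖) := by
      ext lam
      simp only [Set.mem_setOf_eq, Set.mem_Ici]
      rw [key (Real.exp lam)]
      exact ((Real.log_le_iff_le_exp hnA)).symm
    rw [hset, csInf_Ici]
end
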